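/- If M ⊆ W is a perfect 3-dimensional matching of (X, Y, Z, W) with |X| = |Y| = |Z| = u, then the constructed TAS instance admits a feasible solution with exactly u completed jobs, namely U_{j_w} = (x, y, z) for each w = (x, y, z) ∈ M and the empty assignment for all other jobs. -/

import Mathlib

/-- A TAS instance: timeline `[t]`, knowledge domains `K`, workers with
expertise, wage and availability, and jobs with domain, quality threshold,
cost threshold and release date. -/
structure TASInstance (K Worker Job : Type) where
  t : ℕ
  e : Worker → K → ℕ
  w : Worker → K → ℕ
  avail : Worker → ℕ → Bool
  dom : Job → K
  Q : Job → ℕ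
  C : Job → ℕ
  r : Job → ℕ
  r_lt : ∀ j, r j < t

namespace TASInstance

variable {K Worker Job : Type}

/-- Cost of job `j` under a solution: total wage of assigned workers. -/
def cost (x : TASInstance K Worker Job) (y : Job → ℕ → Option Worker) (j : Job) : ℕ :=
  ∑ d ∈ Finset.range x.t, ((y j d).elim 0 fun i => x.w i (x.dom j))

/-- Quality of job `j` under a solution: total expertise of assigned workers. -/
def qual (x : TASInstance K Worker Job) (y : Job → ℕ → Option Worker) (j : Job) : ℕ :=
  ∑ d ∈ Finset.range x.t, ((y j d).elim 0 fun i => x.e i (x.dom j))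

/-- Feasibility constraints (a)-(f); (b) holds by representation. -/
def Feasible (x : TASInstance K Worker Job) (y : Job → ℕ → Option Worker) : Prop :=
  -- (a) no worker on two distinct jobs at the same time
  (∀ d j j' i, j ≠ j' → y j d = some i → y j' d ≠ some i) ∧
  -- (c) no worker assigned twice to the same job
  (∀ j d d' i, d ≠ d' → y j d = some i → y j d' ≠ some i) ∧
  -- (d) workers only on days where they are available
  (∀ j d i, y j d = some i → x.avail i d = true) ∧
  -- (e) no assignment before the release date
  (∀ j d, d < x.r j → y j d = none) ∧
  -- solutions are vectors of dimension t
  (∀ j d, x.t ≤ d → y j d = none) ∧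
  -- (f) no job exceeds its budget
  (∀ j, x.cost y j ≤ x.C j)

/-- A job is completed if it reaches its quality threshold. -/
def CompletedJob (x : TASInstance K Worker Job) (y : Job → ℕ → Option Worker) (j : Job) : Prop :=
  x.Q j ≤ x.qual y j

/-- The objective `m(x,y)`: number of completed jobs. -/
def measure (x : TASInstance K Worker Job) [Fintype Job] (y : Job → ℕ → Option Worker) : ℕ :=
  (Finset.univ.filter fun j => x.Q j ≤ x.qual y j).card

end TASInstance

/-- The TAS instance constructed from a 3-Dimensional Matching instance `(X, Y, Z, W)`:
3 timeslots, one domain and one job per triple `w ∈ W` (with `Q = C = 3` and release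
date 0), workers `X ∪ Y ∪ Z` available exactly on days 0, 1, 2 respectively, and unit
expertise and wage exactly for the three members of each triple in its job's domain. -/
def tdmInstance (X Y Z : Type) [DecidableEq X] [DecidableEq Y] [DecidableEq Z]
    (W : Finset (X × Y × Z)) :
    TASInstance {w // w ∈ W} (X ⊕ Y ⊕ Z) {w // w ∈ W} where
  t := 3
  e := fun i k =>
    match i with
    | Sum.inl x => if x = k.val.1 then 1 else 0
    | Sum.inr (Sum.inl y) => if y = k.val.2.1 then 1 else 0
    | Sum.inr (Sum.inr z) => if z = k.val.2.2 then 1 else 0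
  w := fun i k =>
    match i with
    | Sum.inl x => if x = k.val.1 then 1 else 0
    | Sum.inr (Sum.inl y) => if y = k.val.2.1 then 1 else 0
    | Sum.inr (Sum.inr z) => if z = k.val.2.2 then 1 else 0
  avail := fun i d =>
    match i with
    | Sum.inl _ => d == 0
    | Sum.inr (Sum.inl _) => d == 1
    | Sum.inr (Sum.inr _) => d == 2
  dom := fun j => j
  Q := fun _ => 3
  C := fun _ => 3
  r := fun _ => 0
  r_lt := fun _ => by simp

/-- `M` is a 3-dimensional matching: distinct triples differ in all coordinates. -/
def Is3DMatching {X Y Z : Type} (M : Finset (X × Y × Z)) : Prop :=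
  ∀ w ∈ M, ∀ w' ∈ M, w ≠ w' →
    w.1 ≠ w'.1 ∧ w.2.1 ≠ w'.2.1 ∧ w.2.2 ≠ w'.2.2

/-- The solution constructed from a matching `M ⊆ W`: for `w = (x,y,z) ∈ M` the job `j_w`
receives `x` on day 0, `y` on day 1 and `z` on day 2; all other jobs get the empty
assignment. -/
def tdmSolution {X Y Z : Type} [DecidableEq X] [DecidableEq Y] [DecidableEq Z]
    (W M : Finset (X × Y × Z)) :
    {w // w ∈ W} → ℕ → Option (X ⊕ Y ⊕ Z) := fun j d =>
  if j.val ∈ M then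
    match d with
    | 0 => some (Sum.inl j.val.1)
    | 1 => some (Sum.inr (Sum.inl j.val.2.1))
    | 2 => some (Sum.inr (Sum.inr j.val.2.2))
    | _ => none
  else none

/-- if `M ⊆ W` is a perfect 3-dimensional matching (`|M| = u` where
`|X| = |Y| = |Z| = u`), then the constructed solution is feasible for the constructed
TAS instance and completes exactly `u` jobs. -/
theorem tdm_perfect_matching_gives_solution
    {X Y Z : Type} [DecidableEq X] [DecidableEq Y] [DecidableEq Z]
    [Fintype X] [Fintype Y] [Fintype Z] (u : ℕ)
    (hX : Fintype.card X = u) (hY : Fintype.card Y = u) (hZ : Fintype.card Z = u)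
    (W M : Finset (X × Y × Z)) (hMW : M ⊆ W)
    (hM : Is3DMatching M) (hcard : M.card = u) :
    (tdmInstance X Y Z W).Feasible (tdmSolution W M) ∧
      (tdmInstance X Y Z W).measure (tdmSolution W M) = u := by
  have hqual : ∀ j : {w // w ∈ W},
      (tdmInstance X Y Z W).qual (tdmSolution W M) j = if j.val ∈ M then 3 else 0 := by
    intro j
    simp only [TASInstance.qual, tdmInstance, tdmSolution]
    by_cases h : j.val ∈ M <;> simp [h, Finset.sum_range_succ]
  have hcost : ∀ j : {w // w ∈ W},
      (tdmInstance X Y Z W).cost (tdmSolution W M) j = if j.val ∈ M then 3 else 0 := by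
    intro j
    simp only [TASInstance.cost, tdmInstance, tdmSolution]
    by_cases h : j.val ∈ M <;> simp [h, Finset.sum_range_succ]
  constructor
  · refine ⟨?_, ?_, ?_, ?_, ?_, ?_⟩
    · intro d j j' i hne h h'
      simp only [tdmSolution] at h h'
      by_cases hjM : j.val ∈ M
      · by_cases hj'M : j'.val ∈ M
        · simp only [hjM, hj'M, if_pos] at h h'
          have hvne : j.val ≠ j'.val := fun e => hne (Subtype.ext e)
          obtain ⟨h1, h2, h3⟩ := hM _ hjM _ hj'M hvne
          match d with
          | 0 => exact h1 (Sum.inl.inj ((Option.some.inj h).trans (Option.some.inj h').symm))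
          | 1 => exact h2 (Sum.inl.inj (Sum.inr.inj
              ((Option.some.inj h).trans (Option.some.inj h').symm)))
          | 2 => exact h3 (Sum.inr.inj (Sum.inr.inj
              ((Option.some.inj h).trans (Option.some.inj h').symm)))
          | (n+3) => simp at h
        · simp [hj'M] at h'
      · simp [hjM] at h
    · intro j d d' i hne h h'
      simp only [tdmSolution] at h h'
      by_cases hjM : j.val ∈ M
      · simp only [hjM, if_pos] at h h'
        match d, d' with
        | 0, 0 | 1, 1 | 2, 2 => exact hne rfl
        | 0, 1 | 0, 2 | 1, 0 | 2, 0 =>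
          exact nomatch ((Option.some.inj h).trans (Option.some.inj h').symm)
        | 1, 2 | 2, 1 =>
          exact nomatch (Sum.inr.inj
            ((Option.some.inj h).trans (Option.some.inj h').symm))
        | (n+3), _ => simp at h
        | 0, (n+3) | 1, (n+3) | 2, (n+3) => simp at h'
      · simp [hjM] at h
    · intro j d i h
      simp only [tdmSolution] at h
      by_cases hjM : j.val ∈ M
      · simp only [hjM, if_pos] at h
        match d with
        | 0 => cases h; rfl
        | 1 => cases h; rfl
        | 2 => cases h; rfl
        | (n+3) => simp at h
      · simp [hjM] at h
    · intro j d hd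
      simp [tdmInstance] at hd
    · intro j d hd
      simp only [tdmInstance] at hd
      simp only [tdmSolution]
      match d, hd with
      | (n+3), _ => split <;> rfl
    · intro j
      rw [hcost j]
      simp only [tdmInstance]
      split <;> omega
  · simp only [TASInstance.measure]
    have : (Finset.univ.filter fun j : {w // w ∈ W} =>
        (tdmInstance X Y Z W).Q j ≤ (tdmInstance X Y Z W).qual (tdmSolution W M) j)
        = Finset.univ.filter fun j : {w // w ∈ W} => j.val ∈ M := by
      apply Finset.filter_congr
      intro j _
      rw [hqual j]
      simp only [tdmInstance]
      by_cases h : j.val ∈ M <;> simp [h]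
    rw [this, ← hcard]
    apply Finset.card_bij (fun j _ => j.val)
    · intro a ha; simpa using ha
    · intro a _ b _ e; exact Subtype.ext e
    · intro b hb; exact ⟨⟨b, hMW hb⟩, by simp [hb], rfl⟩
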